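/- There exists a proper 7-coloring of the plane: a function c : ℝ² → Fin 7 such that any two points at Euclidean distance exactly 1 receive different colors. -/
import Mathlib


set_option maxHeartbeats 1000000 in
/-- There exists a proper 7-coloring of the plane: a function c : ℝ² → Fin 7 such that
any two points at Euclidean distance exactly 1 receive different colors. -/
theorem plane_proper_seven_coloring_exists :
    ∃ c : EuclideanSpace ℝ (Fin 2) → Fin 7,
      ∀ x y : EuclideanSpace ℝ (Fin 2), dist x y = 1 → c x ≠ c y := by
  refine ⟨fun p => ((⌊(p 0 + 69/50 * (⌊2 * p 1⌋ : ℝ)) / (43/50)⌋ + 3 * ⌊2 * p 1⌋ : ℤ)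
      : ZMod 7), ?_⟩
  intro x y hdist hc
  simp only at hc
  set a : ℝ := x 0 with ha_def
  set b : ℝ := x 1 with hb_def
  set a' : ℝ := y 0 with ha'_def
  set b' : ℝ := y 1 with hb'_def
  set j : ℤ := ⌊2 * b⌋ with hj_def
  set j' : ℤ := ⌊2 * b'⌋ with hj'_def
  set i : ℤ := ⌊(a + 69/50 * (j : ℝ)) / (43/50)⌋ with hi_def
  set i' : ℤ := ⌊(a' + 69/50 * (j' : ℝ)) / (43/50)⌋ with hi'_def
  have hsum : (a - a') ^ 2 + (b - b') ^ 2 = 1 := by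
    have h1 : dist x y ^ 2 = 1 := by rw [hdist]; norm_num
    rw [EuclideanSpace.dist_eq, Fin.sum_univ_two,
      Real.sq_sqrt (by positivity)] at h1
    simpa [ha_def, hb_def, ha'_def, hb'_def, Real.dist_eq, sq_abs] using h1
  have hdvd : (7 : ℤ) ∣ (i' + 3 * j') - (i + 3 * j) :=
    Int.ModEq.dvd ((ZMod.intCast_eq_intCast_iff _ _ _).mp hc)
  clear hc hdist
  have hj1 : (j : ℝ) ≤ 2 * b := Int.floor_le _
  have hj2 : 2 * b < (j : ℝ) + 1 := Int.lt_floor_add_one _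
  have hj'1 : (j' : ℝ) ≤ 2 * b' := Int.floor_le _
  have hj'2 : 2 * b' < (j' : ℝ) + 1 := Int.lt_floor_add_one _
  have hi1 : (i : ℝ) ≤ (a + 69/50 * (j : ℝ)) / (43/50) := Int.floor_le _
  have hi2 : (a + 69/50 * (j : ℝ)) / (43/50) < (i : ℝ) + 1 := Int.lt_floor_add_one _
  have hi'1 : (i' : ℝ) ≤ (a' + 69/50 * (j' : ℝ)) / (43/50) := Int.floor_le _
  have hi'2 : (a' + 69/50 * (j' : ℝ)) / (43/50) < (i' : ℝ) + 1 := Int.lt_floor_add_one _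
  clear_value i i' j j'
  clear hi_def hi'_def hj_def hj'_def ha_def hb_def ha'_def hb'_def
  have hA1 : a - a' ≤ 1 := by nlinarith [sq_nonneg (b - b'), sq_nonneg (a - a' - 1)]
  have hA2 : -1 ≤ a - a' := by nlinarith [sq_nonneg (b - b'), sq_nonneg (a - a' + 1)]
  have hB1 : b - b' ≤ 1 := by nlinarith [sq_nonneg (a - a'), sq_nonneg (b - b' - 1)]
  have hB2 : -1 ≤ b - b' := by nlinarith [sq_nonneg (a - a'), sq_nonneg (b - b' + 1)]
  have hdj1 : j - j' ≤ 2 := by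
    have h3 : ((j - j' : ℤ) : ℝ) < 3 := by push_cast; linarith
    have : (j - j' : ℤ) < 3 := by exact_mod_cast h3
    omega
  have hdj2 : -2 ≤ j - j' := by
    have h3 : (-3 : ℝ) < ((j - j' : ℤ) : ℝ) := by push_cast; linarith
    have : (-3 : ℤ) < j - j' := by exact_mod_cast h3
    omega
  have hv : j - j' = -2 ∨ j - j' = -1 ∨ j - j' = 0 ∨ j - j' = 1 ∨ j - j' = 2 := by omega
  rcases hv with hv | hv | hv | hv | hv
  · -- Δj = -2
    have hjr : (j : ℝ) - (j' : ℝ) = -2 := by exact_mod_cast hv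
    have hbb : b' - b > 1 / 2 := by linarith
    have haa1 : a - a' < 867/1000 := by nlinarith [sq_nonneg (a - a' - 867/1000)]
    have haa2 : -(867/1000) < a - a' := by nlinarith [sq_nonneg (a - a' + 867/1000)]
    have hd1 : ((i - i' : ℤ) : ℝ) < -1 := by push_cast; linarith
    have hd2 : (-6 : ℝ) < ((i - i' : ℤ) : ℝ) := by push_cast; linarith
    have e1 : (i - i' : ℤ) < -1 := by exact_mod_cast hd1
    have e2 : (-6 : ℤ) < i - i' := by exact_mod_cast hd2
    omega
  · -- Δj = -1
    have hjr : (j : ℝ) - (j' : ℝ) = -1 := by exact_mod_cast hv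
    have hd1 : ((i - i' : ℤ) : ℝ) < 1 := by push_cast; linarith
    have hd2 : (-4 : ℝ) < ((i - i' : ℤ) : ℝ) := by push_cast; linarith
    have e1 : (i - i' : ℤ) < 1 := by exact_mod_cast hd1
    have e2 : (-4 : ℤ) < i - i' := by exact_mod_cast hd2
    omega
  · -- Δj = 0
    have hjr : (j : ℝ) - (j' : ℝ) = 0 := by exact_mod_cast hv
    have hd1 : ((i - i' : ℤ) : ℝ) < 3 := by push_cast; linarith
    have hd2 : (-3 : ℝ) < ((i - i' : ℤ) : ℝ) := by push_cast; linarith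
    have e1 : (i - i' : ℤ) < 3 := by exact_mod_cast hd1
    have e2 : (-3 : ℤ) < i - i' := by exact_mod_cast hd2
    have hii : i = i' := by omega
    have hir : (i : ℝ) - (i' : ℝ) = 0 := by rw [hii]; ring
    have hsa : a - a' < 43/50 := by linarith
    have hsa' : -(43/50) < a - a' := by linarith
    have hsb : b - b' < 1/2 := by linarith
    have hsb' : -(1/2) < b - b' := by linarith
    nlinarith [hsum, hsa, hsa', hsb, hsb']
  · -- Δj = 1
    have hjr : (j : ℝ) - (j' : ℝ) = 1 := by exact_mod_cast hv
    have hd1 : ((i - i' : ℤ) : ℝ) < 4 := by push_cast; linarith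
    have hd2 : (-1 : ℝ) < ((i - i' : ℤ) : ℝ) := by push_cast; linarith
    have e1 : (i - i' : ℤ) < 4 := by exact_mod_cast hd1
    have e2 : (-1 : ℤ) < i - i' := by exact_mod_cast hd2
    omega
  · -- Δj = 2
    have hjr : (j : ℝ) - (j' : ℝ) = 2 := by exact_mod_cast hv
    have hbb : b - b' > 1 / 2 := by linarith
    have haa1 : a - a' < 867/1000 := by nlinarith [sq_nonneg (a - a' - 867/1000)]
    have haa2 : -(867/1000) < a - a' := by nlinarith [sq_nonneg (a - a' + 867/1000)]
    have hd1 : ((i - i' : ℤ) : ℝ) < 6 := by push_cast; linarith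
    have hd2 : (1 : ℝ) < ((i - i' : ℤ) : ℝ) := by push_cast; linarith
    have e1 : (i - i' : ℤ) < 6 := by exact_mod_cast hd1
    have e2 : (1 : ℤ) < i - i' := by exact_mod_cast hd2
    omega
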